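/- A function F : [0,∞]^I → [0,∞] is an extended quasi-pseudometric aggregation function on products (i.e., for every family of extended quasi-pseudometric spaces {(X_i, d_i)}, F∘d_Π is an extended quasi-pseudometric on ∏ X_i) if and only if F, viewed as a map of quantales P₊^I → P₊, is a lax morphism, i.e., F is monotone with respect to the componentwise opposite order (equivalently: x ≤ y componentwise implies F(x) ≤ F(y)), F((0)_i) = 0, and F(x + y) ≤ F(x) + F(y) for all x, y ∈ [0,∞]^I. -/

import Mathlib

open ENNReal

/-- An extended quasi-pseudometric on `X`: `d x x = 0` and the triangle
inequality. -/
def IsEQPMetric {X : Type*} (d : X → X → ℝ≥0∞) : Prop :=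
  (∀ x, d x x = 0) ∧ ∀ x y z, d x z ≤ d x y + d y z

/-- Path metric on three points. -/
noncomputable def pathD (u v w : ℝ≥0∞) : Fin 3 → Fin 3 → ℝ≥0∞ := fun a b =>
  if a = b then 0
  else if a = 0 ∧ b = 1 then u
  else if a = 1 ∧ b = 2 then v
  else if a = 0 ∧ b = 2 then w
  else ⊤

lemma pathD_metric (u v w : ℝ≥0∞) (h : w ≤ u + v) : IsEQPMetric (pathD u v w) := by
  constructor
  · intro x; simp [pathD]
  · intro a b c
    fin_cases a <;> fin_cases b <;> fin_cases c <;> simp_all [pathD]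

/-- `F : [0,∞]^I → [0,∞]` is an extended quasi-pseudometric aggregation
function on products iff `F`, viewed as a map of quantales `P₊^I → P₊`, is a
lax morphism: `F` is monotone (w.r.t. the componentwise usual order,
equivalently isotone for the opposite orders), `F 0 = 0`, and `F` is
subadditive. -/
theorem stmt10 {I : Type*} (F : (I → ℝ≥0∞) → ℝ≥0∞) :
    (∀ (X : I → Type) (d : ∀ i, X i → X i → ℝ≥0∞),
      (∀ i, IsEQPMetric (d i)) →
        IsEQPMetric (fun x y : ∀ i, X i => F (fun i => d i (x i) (y i)))) ↔
    (Monotone F ∧ F 0 = 0 ∧ ∀ x y, F (x + y) ≤ F x + F y) := by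
  constructor
  · intro H
    have key : ∀ u v w : I → ℝ≥0∞, (∀ i, w i ≤ u i + v i) →
        F w ≤ F u + F v := by
      intro u v w h
      have hm := H (fun _ => Fin 3) (fun i => pathD (u i) (v i) (w i))
        (fun i => pathD_metric _ _ _ (h i))
      have := hm.2 (fun _ => 0) (fun _ => 1) (fun _ => 2)
      simpa [pathD] using this
    have h0 : F 0 = 0 := by
      have hm := H (fun _ => Unit) (fun _ _ _ => 0)
        (fun i => ⟨fun _ => rfl, fun _ _ _ => by simp⟩)
      exact hm.1 (fun _ => ())
    refine ⟨?_, h0, fun x y => key x y _ (fun i => le_rfl)⟩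
    intro a b hab
    have := key b 0 a (fun i => by simpa using hab i)
    simpa [h0] using this
  · rintro ⟨hm, h0, hsub⟩ X d hd
    constructor
    · intro x
      have : (fun i => d i (x i) (x i)) = 0 := funext fun i => (hd i).1 (x i)
      simp [this, h0]
    · intro x y z
      calc F (fun i => d i (x i) (z i))
          ≤ F (fun i => d i (x i) (y i) + d i (y i) (z i)) :=
            hm fun i => (hd i).2 _ _ _
        _ ≤ _ := hsub _ _
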